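/- Let N be a nondeterministic unitary OBDD of width d computing f with variable order π, and let S = {(σ¹,γ¹),...,(σ^r,γ^r)} be a strong 1-fooling set for f at level k. Then the quantum states ψ(σ¹), ..., ψ(σ^r) reached after reading σ¹, ..., σ^r are linearly independent vectors in ℂ^d; in particular d ≥ r. -/

import Mathlib

open scoped BigOperators

/-- State of a nondeterministic unitary OBDD of width `d` after reading input `x`
in variable order `π`: at step `j` the unitary `U j b` is applied, where `b` is the
value of the tested variable `x_{π j}`. -/
noncomputable def nuRun {n d : ℕ} (U : Fin n → Bool → Matrix (Fin d) (Fin d) ℂ)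
    (π : Equiv.Perm (Fin n)) (init : Fin d → ℂ) (x : Fin n → Bool) : Fin d → ℂ :=
  (List.ofFn fun j : Fin n => U j (x (π j))).foldl (fun v M => M.mulVec v) init

/-- All transition matrices are unitary. -/
def IsUnitaryFamily {n d : ℕ} (U : Fin n → Bool → Matrix (Fin d) (Fin d) ℂ) : Prop :=
  ∀ j b, U j b ∈ Matrix.unitaryGroup (Fin d) ℂ

/-- The initial state is a unit vector. -/
def NormalizedInit {d : ℕ} (init : Fin d → ℂ) : Prop :=
  ∑ q, ‖init q‖ ^ 2 = 1

/-- Nondeterministic acceptance: the projection of the final state onto the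
accepting subspace (spanned by the accepting basis states `acc`) is nonzero. -/
def nuAccepts {n d : ℕ} (U : Fin n → Bool → Matrix (Fin d) (Fin d) ℂ)
    (π : Equiv.Perm (Fin n)) (init : Fin d → ℂ) (acc : Finset (Fin d))
    (x : Fin n → Bool) : Prop :=
  ∃ q ∈ acc, nuRun U π init x q ≠ 0

/-- The NUOBDD computes `f`: it accepts exactly the inputs in `f⁻¹(1)`. -/
def nuComputes {n d : ℕ} (U : Fin n → Bool → Matrix (Fin d) (Fin d) ℂ)
    (π : Equiv.Perm (Fin n)) (init : Fin d → ℂ) (acc : Finset (Fin d))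
    (f : (Fin n → Bool) → Bool) : Prop :=
  ∀ x, nuAccepts U π init acc x ↔ f x = true

/-- Number of 1s in the input. -/
def countOnes {n : ℕ} (x : Fin n → Bool) : ℕ :=
  (Finset.univ.filter fun i => x i = true).card

/-- Combine a partial assignment `σ` on the first `k` variables in order `π`
(variable `π j` gets value `σ j` for `j < k`) with an assignment `γ` on the
remaining `n - k` variables, producing a full input in `{0,1}^n`. -/
def combine {n : ℕ} (k : ℕ) (hk : k ≤ n) (π : Equiv.Perm (Fin n))
    (σ : Fin k → Bool) (γ : Fin (n - k) → Bool) : Fin n → Bool :=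
  fun i =>
    if h : ((π.symm i : Fin n) : ℕ) < k then σ ⟨((π.symm i : Fin n) : ℕ), h⟩
    else γ ⟨((π.symm i : Fin n) : ℕ) - k, by
      have h1 : ((π.symm i : Fin n) : ℕ) < n := (π.symm i).isLt
      omega⟩

/-- A strong 1-fooling set for `f` at level `k` under order `π`: every pair
`(σ, γ)` satisfies `f(σγ) = 1`, and for distinct pairs `(σ, γ)`, `(σ', γ')` we
have `f(σγ') = 0` and `f(σ'γ) = 0`. -/
def IsStrongFoolingSet {n : ℕ} (k : ℕ) (hk : k ≤ n)
    (f : (Fin n → Bool) → Bool) (π : Equiv.Perm (Fin n))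
    (S : Finset ((Fin k → Bool) × (Fin (n - k) → Bool))) : Prop :=
  (∀ p ∈ S, f (combine k hk π p.1 p.2) = true) ∧
  (∀ p ∈ S, ∀ q ∈ S, p ≠ q →
    f (combine k hk π p.1 q.2) = false ∧ f (combine k hk π q.1 p.2) = false)

/-- The quantum state of the NUOBDD after the first `k` steps, reading the partial
assignment `σ` on the first `k` tested variables. -/
noncomputable def nuRunPrefix {n d : ℕ} (k : ℕ) (hk : k ≤ n)
    (U : Fin n → Bool → Matrix (Fin d) (Fin d) ℂ)
    (init : Fin d → ℂ) (σ : Fin k → Bool) : Fin d → ℂ :=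
  (List.ofFn fun j : Fin k => U (Fin.castLE hk j) (σ j)).foldl
    (fun v M => M.mulVec v) init

-- auxiliary lemmas

private lemma ofFn_split_aux {α : Type*} {n k : ℕ} (hk : k ≤ n) (g : Fin n → α) :
    List.ofFn g = List.ofFn (fun j : Fin k => g (Fin.castLE hk j)) ++
      List.ofFn (fun j : Fin (n - k) => g ⟨k + j, by omega⟩) := by
  apply List.ext_getElem
  · simp; omega
  · intro i hi hi'
    simp only [List.getElem_ofFn]
    rcases lt_or_ge i k with h | h
    · rw [List.getElem_append_left (by simpa using h)]
      simp [Fin.castLE]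
    · rw [List.getElem_append_right (by simpa using h)]
      simp only [List.getElem_ofFn]
      congr 1
      simp at hi
      apply Fin.ext
      simp; omega

private noncomputable def runListLin {d : ℕ} (l : List (Matrix (Fin d) (Fin d) ℂ)) :
    (Fin d → ℂ) →ₗ[ℂ] (Fin d → ℂ) :=
  l.foldl (fun L M => (Matrix.mulVecLin M).comp L) LinearMap.id

private lemma runListLin_apply {d : ℕ} (l : List (Matrix (Fin d) (Fin d) ℂ))
    (v : Fin d → ℂ) :
    runListLin l v = l.foldl (fun v M => M.mulVec v) v := by
  suffices h : ∀ (L : (Fin d → ℂ) →ₗ[ℂ] (Fin d → ℂ)),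
      (l.foldl (fun L M => (Matrix.mulVecLin M).comp L) L) v
        = l.foldl (fun v M => M.mulVec v) (L v) by
    simpa [runListLin] using h LinearMap.id
  induction l with
  | nil => intro L; simp
  | cons M l ih =>
      intro L
      simp only [List.foldl_cons, ih]
      simp [Matrix.mulVecLin]

private lemma nuRun_combine {n d : ℕ} (k : ℕ) (hk : k ≤ n)
    (U : Fin n → Bool → Matrix (Fin d) (Fin d) ℂ)
    (π : Equiv.Perm (Fin n)) (init : Fin d → ℂ)
    (σ : Fin k → Bool) (γ : Fin (n - k) → Bool) :
    nuRun U π init (combine k hk π σ γ) =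
      runListLin (List.ofFn fun j : Fin (n - k) =>
          U ⟨k + j, by omega⟩ (γ j)) (nuRunPrefix k hk U init σ) := by
  rw [nuRun]
  have hfun : (fun j : Fin n => U j (combine k hk π σ γ (π j)))
      = fun j : Fin n =>
          if h : (j : ℕ) < k then U j (σ ⟨j, h⟩) else U j (γ ⟨(j : ℕ) - k, by omega⟩) := by
    funext j
    have : combine k hk π σ γ (π j) =
        if h : (j : ℕ) < k then σ ⟨j, h⟩ else γ ⟨(j : ℕ) - k, by omega⟩ := by
      simp [combine, Equiv.symm_apply_apply]
    rw [this]
    split <;> rfl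
  rw [hfun, ofFn_split_aux hk, List.foldl_append, runListLin_apply]
  have hpre : (List.ofFn fun j : Fin k =>
      (fun j0 : Fin n => if h : (j0 : ℕ) < k then U j0 (σ ⟨j0, h⟩)
        else U j0 (γ ⟨(j0 : ℕ) - k, by omega⟩)) (Fin.castLE hk j))
      = List.ofFn fun j : Fin k => U (Fin.castLE hk j) (σ j) := by
    congr 1
    funext j
    dsimp only
    rw [dif_pos (show ((Fin.castLE hk j : Fin n) : ℕ) < k from j.isLt)]
    rfl
  have hsuf : (List.ofFn fun j : Fin (n - k) =>
      (fun j0 : Fin n => if h : (j0 : ℕ) < k then U j0 (σ ⟨j0, h⟩)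
        else U j0 (γ ⟨(j0 : ℕ) - k, by omega⟩)) (⟨k + j, by omega⟩ : Fin n))
      = List.ofFn fun j : Fin (n - k) => U ⟨k + j, by omega⟩ (γ j) := by
    congr 1
    funext j
    dsimp only
    rw [dif_neg (by simp)]
    have hj : (⟨k + (j : ℕ) - k, by omega⟩ : Fin (n - k)) = j := Fin.ext (by simp)
    rw [hj]
  rw [hpre, hsuf, nuRunPrefix]

/-- If `N` is a nondeterministic unitary OBDD of width `d` computing `f` with
order `π`, and `(σ¹,γ¹),…,(σ^r,γ^r)` form a strong 1-fooling set for `f` at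
level `k`, then the states `ψ(σ¹),…,ψ(σ^r)` reached after reading
`σ¹,…,σ^r` are linearly independent in `ℂ^d`; in particular `d ≥ r`. -/
theorem nuobdd_foolingSet_states_linearIndependent
    (n d k r : ℕ) (hk : k ≤ n)
    (f : (Fin n → Bool) → Bool)
    (U : Fin n → Bool → Matrix (Fin d) (Fin d) ℂ)
    (hU : IsUnitaryFamily U)
    (π : Equiv.Perm (Fin n)) (init : Fin d → ℂ) (hinit : NormalizedInit init)
    (acc : Finset (Fin d))
    (hcomp : nuComputes U π init acc f)
    (σ : Fin r → Fin k → Bool) (γ : Fin r → Fin (n - k) → Bool)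
    (hinj : Function.Injective fun i => (σ i, γ i))
    (h1 : ∀ i, f (combine k hk π (σ i) (γ i)) = true)
    (h0 : ∀ i j, i ≠ j → f (combine k hk π (σ i) (γ j)) = false) :
    LinearIndependent ℂ (fun i => nuRunPrefix k hk U init (σ i)) ∧ r ≤ d := by
  classical
  have main : LinearIndependent ℂ (fun i => nuRunPrefix k hk U init (σ i)) := by
    rw [Fintype.linearIndependent_iff]
    intro c hc j
    -- from h1 j: accepted, get q ∈ acc with nonzero amplitude
    have hacc : nuAccepts U π init acc (combine k hk π (σ j) (γ j)) :=
      (hcomp _).mpr (h1 j)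
    obtain ⟨q, hq, hqne⟩ := hacc
    rw [nuRun_combine k hk U π init (σ j) (γ j)] at hqne
    set T := runListLin (d := d) (List.ofFn fun m : Fin (n - k) =>
        U ⟨k + m, by omega⟩ (γ j m)) with hT
    have hzero : ∀ i, i ≠ j → T (nuRunPrefix k hk U init (σ i)) q = 0 := by
      intro i hij
      have hnacc : ¬ nuAccepts U π init acc (combine k hk π (σ i) (γ j)) := by
        rw [hcomp]
        simp [h0 i j hij]
      by_contra hne
      exact hnacc ⟨q, hq, by
        rw [nuRun_combine k hk U π init (σ i) (γ j)]; exact hne⟩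
    have := congrArg (fun v => (T v) q) hc
    simp only [map_sum, map_smul] at this
    have hsum : (∑ i, c i • T (nuRunPrefix k hk U init (σ i))) q = 0 := by
      simpa using this
    rw [Finset.sum_apply] at hsum
    have : ∑ i, c i * T (nuRunPrefix k hk U init (σ i)) q = 0 := by
      simpa [Pi.smul_apply, smul_eq_mul] using hsum
    rw [Finset.sum_eq_single j] at this
    · exact (mul_eq_zero.mp this).resolve_right hqne
    · intro i _ hij
      rw [hzero i hij, mul_zero]
    · intro h; exact absurd (Finset.mem_univ j) h
  refine ⟨main, ?_⟩
  have := main.fintype_card_le_finrank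
  simpa using this
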